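/- A bounded analytic function f on {z : Re z > 0} that vanishes at all points of an arithmetic progression a + kb (k = 0,1,2,…) with a, b > 0 real vanishes identically on the right half-plane. -/

import Mathlib

open Complex Filter Set Finset Topology

/-- Divergence of the Blaschke-type product along an arithmetic progression. -/
lemma aux_blaschke_prod_tendsto_zero (a b x : ℝ) (hb : 0 < b) (hx : 0 < x)
    (hxa : x < a) :
    Tendsto (fun n => ∏ k ∈ Finset.range n, ((a + k * b) - x) / ((a + k * b) + x))
      atTop (𝓝 0) := by
  have ha : 0 < a := hx.trans hxa
  have hs : ∀ k : ℕ, x < a + k * b := fun k => lt_of_lt_of_le hxa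
    (by nlinarith [Nat.cast_nonneg (α := ℝ) k])
  have hsx : ∀ k : ℕ, 0 < a + k * b + x := fun k => by nlinarith [hs k]
  have hnn : ∀ n, 0 ≤ ∏ k ∈ Finset.range n, ((a + k * b) - x) / ((a + k * b) + x) := by
    intro n
    exact Finset.prod_nonneg fun k _ => div_nonneg (by nlinarith [hs k]) (hsx k).le
  have key1 : ∀ n, (∏ k ∈ Finset.range n, ((a + k * b) - x) / ((a + k * b) + x))
      ≤ Real.exp (-(∑ k ∈ Finset.range n, 2 * x / ((a + k * b) + x))) := by
    intro n
    rw [← Finset.sum_neg_distrib, Real.exp_sum]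
    refine Finset.prod_le_prod (fun k _ => div_nonneg (by nlinarith [hs k]) (hsx k).le)
      (fun k _ => ?_)
    have h1 : ((a + k * b) - x) / ((a + k * b) + x) = 1 + -(2 * x / ((a + k * b) + x)) := by
      field_simp
      ring
    rw [h1]
    have := Real.add_one_le_exp (-(2 * x / ((a + k * b) + x)))
    linarith
  have hdiv : Tendsto (fun n => ∑ k ∈ Finset.range n, 2 * x / ((a + k * b) + x))
      atTop atTop := by
    rw [← not_summable_iff_tendsto_nat_atTop_of_nonneg
      (fun k => div_nonneg (by positivity) (hsx k).le)]
    intro hsum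
    have hC : (0:ℝ) < 2 * x / (a + x + b) := by positivity
    have h1 : Summable (fun k : ℕ => (2 * x / (a + x + b)) * (1 / ((k : ℝ) + 1))) := by
      refine Summable.of_nonneg_of_le (fun k => by positivity) (fun k => ?_) hsum
      rw [mul_one_div, div_div]
      refine div_le_div_of_nonneg_left (by positivity) (hsx k) ?_
      have : (0:ℝ) ≤ (k:ℝ) := Nat.cast_nonneg k
      nlinarith
    have h2 : Summable (fun k : ℕ => 1 / ((k : ℝ) + 1)) :=
      (summable_mul_left_iff hC.ne').mp h1
    have h3 : ¬ Summable (fun k : ℕ => 1 / ((k : ℝ) + 1)) := by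
      have := mt (summable_nat_add_iff (f := fun n : ℕ => 1 / (n : ℝ)) 1).1
        Real.not_summable_one_div_natCast
      simpa using this
    exact h3 h2
  refine squeeze_zero hnn key1 ?_
  exact Real.tendsto_exp_atBot.comp (tendsto_neg_atTop_atBot.comp hdiv)

/-- A bounded analytic function on the open right half-plane vanishing at all points of an
arithmetic progression `a + k·b` (`k = 0,1,2,…`) with `a, b > 0` vanishes identically. -/
theorem vanish_of_arithmetic_progression (f : ℂ → ℂ)
    (hf : DifferentiableOn ℂ f {z : ℂ | 0 < z.re})
    (hbd : ∃ M : ℝ, ∀ z : ℂ, 0 < z.re → ‖f z‖ ≤ M)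
    (a b : ℝ) (ha : 0 < a) (hb : 0 < b)
    (hzero : ∀ k : ℕ, f ((a : ℂ) + (k : ℂ) * (b : ℂ)) = 0) :
    ∀ z : ℂ, 0 < z.re → f z = 0 := by
  obtain ⟨M₀, hM₀⟩ := hbd
  set M : ℝ := max M₀ 0 with hMdef
  have hMnn : 0 ≤ M := le_max_right _ _
  have hfM : ∀ z : ℂ, 0 < z.re → ‖f z‖ ≤ M := fun z hz => (hM₀ z hz).trans (le_max_left _ _)
  set c : ℝ := a / 2 with hcdef
  have hc : 0 < c := by positivity
  set V : Set ℂ := {z : ℂ | -c < z.re} with hVdef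
  have hVopen : IsOpen V := isOpen_lt continuous_const Complex.continuous_re
  set F : ℂ → ℂ := fun z => f (z + (c : ℂ)) with hFdef
  set s : ℕ → ℝ := fun k => c + k * b with hsdef
  set t : ℕ → ℂ := fun k => ((s k : ℝ) : ℂ) with htdef
  have hspos : ∀ k, 0 < s k := fun k => by
    have : (0:ℝ) ≤ (k:ℝ) := Nat.cast_nonneg k
    simp only [hsdef]; nlinarith
  have hsmono : ∀ {k n : ℕ}, k ≤ n → s k ≤ s n := fun {k n} h => by
    have : (k:ℝ) ≤ (n:ℝ) := Nat.cast_le.mpr h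
    simp only [hsdef]; nlinarith
  have htre : ∀ k, (t k).re = s k := fun k => by simp [htdef]
  have htnorm : ∀ k, ‖t k‖ = s k := fun k => by
    simp [htdef, Complex.norm_real, abs_of_pos (hspos k)]
  have ht_ne : ∀ {m n : ℕ}, m ≠ n → t m ≠ t n := by
    intro m n hmn h
    have hsmn : s m = s n := Complex.ofReal_inj.mp h
    have h1 : (m:ℝ) * b = (n:ℝ) * b := by
      simp only [hsdef] at hsmn; linarith
    have h2 : (m:ℝ) = n := mul_right_cancel₀ hb.ne' h1
    exact hmn (by exact_mod_cast h2)
  have hFM : ∀ z : ℂ, -c < z.re → ‖F z‖ ≤ M := fun z hz => by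
    refine hfM _ ?_
    simp only [Complex.add_re, Complex.ofReal_re]
    linarith
  have hFt : ∀ k, F (t k) = 0 := fun k => by
    have : (t k) + (c:ℂ) = (a:ℂ) + (k:ℂ) * (b:ℂ) := by
      simp only [htdef, hsdef, hcdef]
      push_cast
      ring
    simp only [hFdef, this, hzero k]
  have hFdiff : DifferentiableOn ℂ F V := by
    refine hf.comp ((differentiable_id.add_const _).differentiableOn) ?_
    intro z hz
    have hz' : -c < z.re := hz
    simp only [Set.mem_setOf_eq, Complex.add_re, Complex.ofReal_re]
    linarith
  -- Blaschke-type quotients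
  set G : ℕ → ℂ → ℂ := fun n =>
    Nat.rec F (fun n g => fun z => dslope g (t n) z * (z + t n)) n with hGdef
  have hGsucc : ∀ n z, G (n+1) z = dslope (G n) (t n) z * (z + t n) := fun n z => rfl
  have htV : ∀ n, t n ∈ V := fun n => by
    simp only [hVdef, Set.mem_setOf_eq, htre]
    linarith [hspos n]
  have hGdiff : ∀ n, DifferentiableOn ℂ (G n) V := by
    intro n
    induction n with
    | zero => exact hFdiff
    | succ n ih =>
      have : DifferentiableOn ℂ (dslope (G n) (t n)) V :=
        (differentiableOn_dslope (hVopen.mem_nhds (htV n))).2 ih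
      exact this.mul ((differentiableOn_id).add (differentiableOn_const _))
  have hGzero : ∀ n m, n ≤ m → G n (t m) = 0 := by
    intro n
    induction n with
    | zero => exact fun m _ => hFt m
    | succ n ih =>
      intro m hm
      have hmn : t m ≠ t n := ht_ne (by omega)
      rw [hGsucc, dslope_of_ne _ hmn, slope_def_field, ih m (by omega), ih n le_rfl]
      simp
  have hGeq : ∀ n z, (∀ k, k < n → z ≠ t k) →
      G n z = F z * ∏ k ∈ Finset.range n, ((z + t k) / (z - t k)) := by
    intro n
    induction n with
    | zero => intro z _; simp only [Finset.range_zero, Finset.prod_empty, mul_one]; rfl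
    | succ n ih =>
      intro z hz
      have hzn : z ≠ t n := hz n (by omega)
      rw [hGsucc, dslope_of_ne _ hzn, slope_def_field, hGzero n n le_rfl,
        ih z (fun k hk => hz k (by omega)), Finset.prod_range_succ]
      ring
  -- Phragmén–Lindelöf bound : ‖G n z‖ ≤ M on the closed right half-plane
  have hGbd : ∀ n, ∀ z : ℂ, 0 ≤ z.re → ‖G n z‖ ≤ M := by
    intro n
    -- far-away bound
    have hfar : ∀ z : ℂ, -c < z.re → 2 * s n + 1 ≤ ‖z‖ → ‖G n z‖ ≤ M * 3 ^ n := by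
      intro z hzre hznorm
      have hzne : ∀ k, k < n → z ≠ t k := by
        intro k hk h
        rw [h, htnorm] at hznorm
        have := hsmono hk.le
        linarith [hspos n]
      rw [hGeq n z hzne, norm_mul, norm_prod]
      have hprod : ∀ k ∈ Finset.range n, ‖(z + t k) / (z - t k)‖ ≤ 3 := by
        intro k hk
        have hk' : k < n := Finset.mem_range.mp hk
        have h1 : ‖z - t k‖ ≥ ‖z‖ - s k := by
          have := norm_sub_norm_le z (t k)
          rw [htnorm] at this
          linarith
        have h2 : ‖z + t k‖ ≤ ‖z‖ + s k := by
          have := norm_add_le z (t k)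
          rw [htnorm] at this
          linarith
        have h3 : s k ≤ s n := hsmono hk'.le
        have h4 : 0 < ‖z‖ - s k := by linarith [hspos k]
        rw [norm_div, div_le_iff₀ (by linarith)]
        nlinarith
      calc ‖F z‖ * ∏ k ∈ Finset.range n, ‖(z + t k) / (z - t k)‖
          ≤ M * ∏ k ∈ Finset.range n, (3:ℝ) := by
            refine mul_le_mul (hFM z hzre) ?_ (Finset.prod_nonneg fun k _ => norm_nonneg _) hMnn
            exact Finset.prod_le_prod (fun k _ => norm_nonneg _) hprod
        _ = M * 3 ^ n := by rw [Finset.prod_const, Finset.card_range]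
    intro z hz
    refine PhragmenLindelof.right_half_plane_of_bounded_on_real ?_ ?_ ?_ ?_ hz
    · constructor
      · refine (hGdiff n).mono (fun w hw => ?_)
        have hw' : 0 < w.re := hw
        simp only [hVdef, Set.mem_setOf_eq]
        linarith
      · refine ((hGdiff n).continuousOn).mono ?_
        rw [Complex.closure_setOf_lt_re]
        intro w hw
        simp only [hVdef, Set.mem_setOf_eq] at *
        linarith
    · refine ⟨1, one_lt_two, 0, Asymptotics.IsBigO.of_bound (M * 3 ^ n) ?_⟩
      have h1 : ∀ᶠ w : ℂ in Bornology.cobounded ℂ ⊓ Filter.principal {z : ℂ | 0 < z.re},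
          2 * s n + 1 ≤ ‖w‖ :=
        (eventually_cobounded_le_norm (2 * s n + 1)).filter_mono inf_le_left
      have h2 : ∀ᶠ w : ℂ in Bornology.cobounded ℂ ⊓ Filter.principal {z : ℂ | 0 < z.re},
          w ∈ {z : ℂ | 0 < z.re} := by
        rw [Filter.eventually_inf_principal]
        exact Filter.Eventually.of_forall fun w hw => hw
      filter_upwards [h1, h2] with w hw1 hw2
      have hw2' : 0 < w.re := hw2
      have : ‖Real.exp (0 * ‖w‖ ^ (1:ℝ))‖ = 1 := by
        rw [zero_mul, Real.exp_zero, norm_one]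
      rw [this, mul_one]
      exact hfar w (by linarith) hw1
    · refine Filter.isBoundedUnder_of_eventually_le (a := M * 3 ^ n) ?_
      filter_upwards [Filter.eventually_ge_atTop (2 * s n + 1)] with x hx
      have hx0 : (0:ℝ) < x := lt_of_lt_of_le (by linarith [hspos n]) hx
      refine hfar x (by simp only [Complex.ofReal_re]; linarith) ?_
      rw [Complex.norm_real, Real.norm_eq_abs, abs_of_pos hx0]
      exact hx
    · intro y
      have hyne : ∀ k, k < n → (y : ℂ) * Complex.I ≠ t k := by
        intro k _ h
        have := congrArg Complex.re h
        simp only [Complex.mul_re, Complex.ofReal_re, Complex.I_re, mul_zero,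
          Complex.ofReal_im, Complex.I_im, mul_one, zero_sub, htre] at this
        linarith [hspos k]
      rw [hGeq n _ hyne, norm_mul, norm_prod]
      have hone : ∀ k ∈ Finset.range n,
          ‖((y:ℂ) * Complex.I + t k) / ((y:ℂ) * Complex.I - t k)‖ = 1 := by
        intro k _
        have hkey : (y:ℂ) * Complex.I - t k = -(starRingEnd ℂ ((y:ℂ) * Complex.I + t k)) := by
          simp only [htdef, map_add, map_mul, Complex.conj_ofReal, Complex.conj_I]
          ring
        have hnum : (y:ℂ) * Complex.I + t k ≠ 0 := by
          intro h
          have := congrArg Complex.re h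
          simp only [Complex.add_re, Complex.mul_re, Complex.ofReal_re, Complex.I_re, mul_zero,
            Complex.ofReal_im, Complex.I_im, mul_one, zero_sub, htre, Complex.zero_re] at this
          linarith [hspos k]
        have hden : ‖(y:ℂ) * Complex.I - t k‖ = ‖(y:ℂ) * Complex.I + t k‖ := by
          rw [hkey, norm_neg, RCLike.norm_conj]
        rw [norm_div, hden, div_self (norm_ne_zero_iff.mpr hnum)]
      rw [Finset.prod_congr rfl hone, Finset.prod_const_one, mul_one]
      refine hFM _ ?_
      simp only [Complex.mul_re, Complex.ofReal_re, Complex.I_re, mul_zero,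
        Complex.ofReal_im, Complex.I_im, mul_one, zero_sub]
      linarith
  -- f vanishes on the real interval (c, a)
  have hFx : ∀ x : ℝ, 0 < x → x < c → F x = 0 := by
    intro x hx hxc
    have hxk : ∀ k, x < s k := fun k => lt_of_lt_of_le hxc (by
      have : (0:ℝ) ≤ (k:ℝ) := Nat.cast_nonneg k
      simp only [hsdef]; nlinarith)
    have hxne : ∀ n, ∀ k, k < n → (x:ℂ) ≠ t k := by
      intro n k _ h
      have : x = s k := Complex.ofReal_inj.mp h
      linarith [hxk k]
    have hratio : ∀ k : ℕ, ‖((x:ℂ) - t k) / ((x:ℂ) + t k)‖ = (s k - x) / (s k + x) := by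
      intro k
      have h1 : (x:ℂ) - t k = ((x - s k : ℝ) : ℂ) := by push_cast [htdef]; ring
      have h2 : (x:ℂ) + t k = ((x + s k : ℝ) : ℂ) := by push_cast [htdef]; ring
      rw [norm_div, h1, h2, Complex.norm_real, Complex.norm_real, Real.norm_eq_abs,
        Real.norm_eq_abs, abs_of_neg (by linarith [hxk k]), abs_of_pos (by linarith [hxk k])]
      ring_nf
    have hFeq : ∀ n : ℕ, F x = G n x * ∏ k ∈ Finset.range n, (((x:ℂ) - t k) / ((x:ℂ) + t k)) := by
      intro n
      rw [hGeq n x (hxne n), mul_assoc, ← Finset.prod_mul_distrib]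
      have : ∀ k ∈ Finset.range n,
          ((x:ℂ) + t k) / ((x:ℂ) - t k) * (((x:ℂ) - t k) / ((x:ℂ) + t k)) = 1 := by
        intro k hk
        have h1 : (x:ℂ) - t k ≠ 0 := sub_ne_zero.mpr (hxne n k (Finset.mem_range.mp hk))
        have h2 : (x:ℂ) + t k ≠ 0 := by
          intro h
          have := congrArg Complex.re h
          simp only [Complex.add_re, Complex.ofReal_re, htre, Complex.zero_re] at this
          linarith [hxk k]
        field_simp
      rw [Finset.prod_congr rfl this, Finset.prod_const_one, mul_one]
    have hbound : ∀ n : ℕ, ‖F x‖ ≤ M * ∏ k ∈ Finset.range n, ((s k - x) / (s k + x)) := by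
      intro n
      rw [hFeq n, norm_mul, norm_prod, Finset.prod_congr rfl (fun k _ => hratio k)]
      refine mul_le_mul_of_nonneg_right (hGbd n x ?_) ?_
      · simp [hx.le]
      · exact Finset.prod_nonneg fun k _ => div_nonneg
          (by linarith [hxk k]) (by linarith [hxk k, hx])
    have hlim : Tendsto (fun n => M * ∏ k ∈ Finset.range n, ((s k - x) / (s k + x)))
        atTop (𝓝 0) := by
      have := (aux_blaschke_prod_tendsto_zero c b x hb hx hxc).const_mul M
      simpa [hsdef] using this
    have : ‖F ↑x‖ ≤ 0 := ge_of_tendsto hlim (Filter.Eventually.of_forall hbound)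
    simpa using le_antisymm this (norm_nonneg _)
  have hzeros : ∀ x : ℝ, c < x → x < a → f x = 0 := by
    intro x hx1 hx2
    have h1 : F ((x - c : ℝ) : ℂ) = 0 := hFx (x - c) (by linarith) (by
      simp only [hcdef] at hx1 hx2 ⊢; linarith)
    have h2 : ((x - c : ℝ) : ℂ) + (c : ℂ) = (x : ℂ) := by push_cast; ring
    have h1' : f (((x - c : ℝ) : ℂ) + (c : ℂ)) = 0 := h1
    rwa [h2] at h1'
  -- identity theorem
  have hUopen : IsOpen {z : ℂ | 0 < z.re} := isOpen_lt continuous_const Complex.continuous_re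
  have hUpre : IsPreconnected {z : ℂ | 0 < z.re} := (convex_halfSpace_re_gt 0).isPreconnected
  have hanalytic : AnalyticOnNhd ℂ f {z : ℂ | 0 < z.re} := hf.analyticOnNhd hUopen
  set w₀ : ℂ := ((3 * a / 4 : ℝ) : ℂ) with hw₀def
  have hw₀ : w₀ ∈ {z : ℂ | 0 < z.re} := by
    simp only [hw₀def, Set.mem_setOf_eq, Complex.ofReal_re]; linarith
  set u : ℕ → ℂ := fun n => ((3 * a / 4 + a / (8 * ((n:ℝ) + 1)) : ℝ) : ℂ) with hudef
  have hu0 : ∀ n, f (u n) = 0 := by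
    intro n
    refine hzeros _ ?_ ?_
    · have : (0:ℝ) < a / (8 * ((n:ℝ) + 1)) := by positivity
      simp only [hcdef]; linarith
    · have h1 : a / (8 * ((n:ℝ) + 1)) ≤ a / 8 := by
        apply div_le_div_of_nonneg_left ha.le (by norm_num)
        have : (0:ℝ) ≤ (n:ℝ) := Nat.cast_nonneg n
        linarith
      linarith
  have hune : ∀ n, u n ≠ w₀ := by
    intro n h
    have h2 : 3 * a / 4 + a / (8 * ((n:ℝ) + 1)) = 3 * a / 4 := Complex.ofReal_inj.mp h
    have : (0:ℝ) < a / (8 * ((n:ℝ) + 1)) := by positivity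
    linarith
  have hutend : Tendsto u atTop (𝓝[≠] w₀) := by
    refine tendsto_nhdsWithin_of_tendsto_nhds_of_eventually_within _ ?_
      (Filter.Eventually.of_forall fun n => hune n)
    rw [hudef, hw₀def]
    have h1 : Tendsto (fun n : ℕ => 3 * a / 4 + a / (8 * ((n:ℝ) + 1))) atTop (𝓝 (3 * a / 4)) := by
      have h2 : Tendsto (fun n : ℕ => a / (8 * ((n:ℝ) + 1))) atTop (𝓝 0) := by
        have h3 : Tendsto (fun n : ℕ => 8 * ((n:ℝ) + 1)) atTop atTop := by
          refine Tendsto.const_mul_atTop (by norm_num) ?_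
          exact tendsto_atTop_add_const_right _ _ tendsto_natCast_atTop_atTop
        simpa using h3.const_div_atTop a
      simpa using tendsto_const_nhds.add h2
    exact (Complex.continuous_ofReal.tendsto _).comp h1
  have hfreq : ∃ᶠ z in 𝓝[≠] w₀, f z = 0 :=
    hutend.frequently (Filter.Frequently.of_forall hu0)
  have heq : Set.EqOn f 0 {z : ℂ | 0 < z.re} :=
    hanalytic.eqOn_zero_of_preconnected_of_frequently_eq_zero hUpre hw₀ hfreq
  intro z hz
  exact heq hz
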